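/- arXiv:1608.07636 — 2 statements merged into one kernel-verified Lean document; each statement's English description precedes it below -/
import Mathlib

section
/- Consider the scalar linear recursion on covariances: σ_X(0) = b q₀ Σ_{j=0}^{θ_max} σ_X(j+1) + 1 and σ_X(i) = b q₀ Σ_{j=0}^{θ_max} σ_X(j+1-i) for 1 ≤ i ≤ θ_max+1, where q₀ = 1/(θ_max+1), 0 < b < 1, and σ_X(-i) = σ_X(i). Then the unique solution satisfies σ_X(0) = ((1-b)θ_max + 1)/((1-b)θ_max + (1-b²)) and σ_X(i) = b/((1-b)θ_max + (1-b²)) for 1 ≤ i ≤ θ_max+1. -/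
theorem scalar_covariance_recursion_solution
    (θmax : ℕ) (hθ : 2 ≤ θmax) (b : ℝ) (hb0 : 0 < b) (hb1 : b < 1)
    (σX : ℤ → ℝ)
    (heven : ∀ i : ℤ, σX (-i) = σX i)
    (h0 : σX 0 = b * (1 / ((θmax : ℝ) + 1)) *
        (∑ j ∈ Finset.range (θmax + 1), σX ((j : ℤ) + 1)) + 1)
    (hi : ∀ i : ℤ, 1 ≤ i → i ≤ (θmax : ℤ) + 1 →
        σX i = b * (1 / ((θmax : ℝ) + 1)) *
          (∑ j ∈ Finset.range (θmax + 1), σX ((j : ℤ) + 1 - i))) :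
    σX 0 = ((1 - b) * (θmax : ℝ) + 1) / ((1 - b) * (θmax : ℝ) + (1 - b ^ 2)) ∧
    ∀ i : ℤ, 1 ≤ i → i ≤ (θmax : ℤ) + 1 →
      σX i = b / ((1 - b) * (θmax : ℝ) + (1 - b ^ 2)) := by
  have hθ0 : (0:ℝ) ≤ (θmax : ℝ) := Nat.cast_nonneg _
  set θ : ℝ := (θmax : ℝ) with hθdef
  set D : ℝ := (1 - b) * θ + (1 - b ^ 2) with hDdef
  have hDpos : 0 < D := by nlinarith
  set A : ℝ := ((1 - b) * θ + 1) / D with hAdef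
  set B : ℝ := b / D with hBdef
  set q : ℝ := 1 / (θ + 1) with hqdef
  have hθ1 : θ + 1 ≠ 0 := by positivity
  have hA : A = b * q * ((θ + 1) * B) + 1 := by
    rw [hAdef, hBdef, hqdef, hDdef]
    have hD2 : (1 - b) * θ + (1 - b ^ 2) ≠ 0 := hDpos.ne'
    field_simp
    ring
  have hB : B = b * q * (A + θ * B) := by
    rw [hAdef, hBdef, hqdef]
    field_simp
    ring
  set d : ℤ → ℝ := fun i => if i = 0 then σX 0 - A else σX i - B with hddef
  have hdeven : ∀ i : ℤ, d (-i) = d i := by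
    intro i
    rcases eq_or_ne i 0 with h | h
    · simp [h]
    · have h' : -i ≠ 0 := neg_ne_zero.mpr h
      simp only [hddef, if_neg h, if_neg h', heven i]
  have hcast : ((θmax : ℕ) + 1 : ℕ) = ((θ : ℝ) + 1) := by push_cast; ring
  -- homogeneous equation for i = 0
  have hd0' : d 0 = b * q * ∑ j ∈ Finset.range (θmax + 1), d ((j : ℤ) + 1) := by
    have hsum : ∑ j ∈ Finset.range (θmax + 1), d ((j : ℤ) + 1)
        = (∑ j ∈ Finset.range (θmax + 1), σX ((j : ℤ) + 1)) - (θ + 1) * B := by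
      have : ∀ j ∈ Finset.range (θmax + 1), d ((j : ℤ) + 1) = σX ((j : ℤ) + 1) - B := by
        intro j _
        have : ((j : ℤ) + 1) ≠ 0 := by omega
        simp only [hddef, if_neg this]
      rw [Finset.sum_congr rfl this, Finset.sum_sub_distrib, Finset.sum_const,
        Finset.card_range, nsmul_eq_mul]
      push_cast
      ring
    rw [hsum]
    have hd00 : d 0 = σX 0 - A := by simp only [hddef, if_pos rfl]
    rw [hd00, h0]
    linear_combination -hA
  -- homogeneous equation for 1 ≤ i ≤ θmax + 1
  have hdi' : ∀ i : ℤ, 1 ≤ i → i ≤ (θmax : ℤ) + 1 →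
      d i = b * q * ∑ j ∈ Finset.range (θmax + 1), d ((j : ℤ) + 1 - i) := by
    intro i h1 h2
    have hne : i ≠ 0 := by omega
    set j₀ : ℕ := (i - 1).toNat with hj₀def
    have hj₀ : (j₀ : ℤ) = i - 1 := Int.toNat_of_nonneg (by omega)
    have hj₀mem : j₀ ∈ Finset.range (θmax + 1) := by
      rw [Finset.mem_range]; omega
    have hsum : ∑ j ∈ Finset.range (θmax + 1), d ((j : ℤ) + 1 - i)
        = (∑ j ∈ Finset.range (θmax + 1), σX ((j : ℤ) + 1 - i)) - (A + θ * B) := by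
      have hterm : ∀ j ∈ Finset.range (θmax + 1), d ((j : ℤ) + 1 - i)
          = σX ((j : ℤ) + 1 - i) - ((if j = j₀ then A - B else 0) + B) := by
        intro j _
        by_cases h : j = j₀
        · have hz : (j : ℤ) + 1 - i = 0 := by rw [h, hj₀]; ring
          rw [if_pos h]
          simp only [hddef]
          rw [if_pos hz, show σX ((j : ℤ) + 1 - i) = σX 0 from by rw [hz]]
          ring
        · have hz : (j : ℤ) + 1 - i ≠ 0 := by
            intro hc
            apply h
            have : (j : ℤ) = i - 1 := by omega
            omega
          simp only [hddef, if_neg hz, if_neg h]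
          ring
      rw [Finset.sum_congr rfl hterm, Finset.sum_sub_distrib, Finset.sum_add_distrib,
        Finset.sum_ite_eq' _ j₀ (fun _ => A - B), if_pos hj₀mem, Finset.sum_const,
        Finset.card_range, nsmul_eq_mul]
      push_cast
      ring
    rw [hsum]
    have hdi0 : d i = σX i - B := by simp only [hddef, if_neg hne]
    rw [hdi0, hi i h1 h2]
    linear_combination -hB
  -- the sup of |d| on [0, θmax+1]
  have hnemp : (Finset.Icc (0:ℤ) ((θmax : ℤ) + 1)).Nonempty := ⟨0, by simp; omega⟩
  set M : ℝ := (Finset.Icc (0:ℤ) ((θmax : ℤ) + 1)).sup' hnemp (fun k => |d k|) with hMdef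
  have hle : ∀ k : ℤ, 0 ≤ k → k ≤ (θmax : ℤ) + 1 → |d k| ≤ M := by
    intro k h1 h2
    exact Finset.le_sup' (fun k => |d k|) (Finset.mem_Icc.mpr ⟨h1, h2⟩)
  have hle' : ∀ k : ℤ, -(θmax : ℤ) ≤ k → k ≤ (θmax : ℤ) + 1 → |d k| ≤ M := by
    intro k h1 h2
    rcases le_or_gt 0 k with h | h
    · exact hle k h h2
    · have hk : d k = d (-k) := by
        have := hdeven (-k)
        rwa [neg_neg] at this
      rw [hk]
      exact hle (-k) (by omega) (by omega)
  have hM0 : 0 ≤ M := le_trans (abs_nonneg (d 0)) (hle 0 le_rfl (by omega))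
  -- generic contraction step
  have habs : ∀ (i : ℤ),
      (d i = b * q * ∑ j ∈ Finset.range (θmax + 1), d ((j : ℤ) + 1 - i)) →
      (∀ j ∈ Finset.range (θmax + 1), |d ((j : ℤ) + 1 - i)| ≤ M) → |d i| ≤ b * M := by
    intro i heq hbound
    rw [heq, abs_mul]
    have h1 : |∑ j ∈ Finset.range (θmax + 1), d ((j : ℤ) + 1 - i)| ≤ (θ + 1) * M := by
      calc |∑ j ∈ Finset.range (θmax + 1), d ((j : ℤ) + 1 - i)|
          ≤ ∑ j ∈ Finset.range (θmax + 1), |d ((j : ℤ) + 1 - i)| :=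
            Finset.abs_sum_le_sum_abs _ _
        _ ≤ ∑ _j ∈ Finset.range (θmax + 1), M := Finset.sum_le_sum hbound
        _ = (θ + 1) * M := by
            rw [Finset.sum_const, Finset.card_range, nsmul_eq_mul]
            push_cast; ring
    have hbq : |b * q| = b * q := abs_of_pos (by rw [hqdef]; positivity)
    rw [hbq]
    have hbqpos : 0 ≤ b * q := by rw [hqdef]; positivity
    calc b * q * |∑ j ∈ Finset.range (θmax + 1), d ((j : ℤ) + 1 - i)|
        ≤ b * q * ((θ + 1) * M) := by
          exact mul_le_mul_of_nonneg_left h1 hbqpos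
      _ = b * M := by
          rw [hqdef]; field_simp
  have key : ∀ k ∈ Finset.Icc (0:ℤ) ((θmax : ℤ) + 1), |d k| ≤ b * M := by
    intro k hk
    rw [Finset.mem_Icc] at hk
    obtain ⟨hk1, hk2⟩ := hk
    rcases eq_or_lt_of_le hk1 with h | h
    · rw [← h]
      refine habs 0 (by simpa using hd0') ?_
      intro j hj
      rw [Finset.mem_range] at hj
      exact hle' ((j : ℤ) + 1 - 0) (by omega) (by omega)
    · have h1 : 1 ≤ k := h
      apply habs k (hdi' k h1 hk2)
      intro j hj
      rw [Finset.mem_range] at hj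
      exact hle' ((j : ℤ) + 1 - k) (by omega) (by omega)
  have hMb : M ≤ b * M := Finset.sup'_le _ _ key
  have hMzero : M = 0 := by nlinarith
  have hzero : ∀ k : ℤ, 0 ≤ k → k ≤ (θmax : ℤ) + 1 → d k = 0 := by
    intro k h1 h2
    have := hle k h1 h2
    rw [hMzero] at this
    exact abs_eq_zero.mp (le_antisymm this (abs_nonneg _))
  constructor
  · have h := hzero 0 le_rfl (by omega)
    simp only [hddef, if_pos rfl] at h
    linarith
  · intro i h1 h2
    have h := hzero i (by omega) h2
    have hne : i ≠ 0 := by omega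
    simp only [hddef, if_neg hne] at h
    linarith
end

section
/- Let θ_max ≥ 2 and consider the scalar AR model with uniform random lag: x_t = b·x_{t-Θ-1} + w_t where Θ is uniform on {0,…,θ_max}, independent across time, 0 < b < 1, w_t i.i.d. standard normal. The stationary autocovariances are σ(0) = ((1-b)θ_max+1)/((1-b)θ_max+(1-b²)), σ(i) = b/((1-b)θ_max+(1-b²)) for 1 ≤ i ≤ θ_max+1, and σ(θ_max+2) = b·σ(θ_max+1); in particular σ(θ_max+2) ≠ σ(θ_max+1), and the (θ_max+1)×(θ_max+1) Toeplitz matrix M₁ with M₁(i,j) = σ(θ_max+1+j−i) is invertible. -/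
theorem uniform_lag_autocovariances (θmax : ℕ) (hθ : 2 ≤ θmax)
    (b : ℝ) (hb0 : 0 < b) (hb1 : b < 1)
    (σ : ℕ → ℝ)
    (h0 : σ 0 = ((1 - b) * (θmax : ℝ) + 1) / ((1 - b) * (θmax : ℝ) + (1 - b ^ 2)))
    (h1 : ∀ i : ℕ, 1 ≤ i → i ≤ θmax + 1 →
        σ i = b / ((1 - b) * (θmax : ℝ) + (1 - b ^ 2)))
    (h2 : ∀ i : ℕ, θmax + 1 < i →
        σ i = b * (1 / ((θmax : ℝ) + 1)) * ∑ j ∈ Finset.range (θmax + 1), σ (i - j - 1))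
    (M₁ : Matrix (Fin (θmax + 1)) (Fin (θmax + 1)) ℝ)
    (hM : ∀ i j : Fin (θmax + 1), M₁ i j = σ (θmax + 1 + (j : ℕ) - (i : ℕ))) :
    -- the closed forms satisfy the defining recursion for 0 ≤ i ≤ θmax + 1
    (∀ i : ℕ, i ≤ θmax + 1 →
        σ i = b * (1 / ((θmax : ℝ) + 1)) *
            (∑ j ∈ Finset.range (θmax + 1), σ (((j : ℤ) + 1 - (i : ℤ)).natAbs)) +
          (if i = 0 then 1 else 0)) ∧
    σ (θmax + 2) = b * σ (θmax + 1) ∧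
    σ (θmax + 2) ≠ σ (θmax + 1) ∧
    M₁.det ≠ 0 := by
  have hb1' : (0:ℝ) < 1 - b := by linarith
  have hθR : (2:ℝ) ≤ (θmax : ℝ) := by exact_mod_cast hθ
  have hθ1 : (0:ℝ) < (θmax:ℝ) + 1 := by linarith
  set D : ℝ := (1 - b) * (θmax : ℝ) + (1 - b ^ 2) with hD_def
  have hD : 0 < D := by nlinarith
  set c : ℝ := b / D with hc_def
  set r : ℝ := b / ((θmax:ℝ) + 1) with hr_def
  have hc : 0 < c := div_pos hb0 hD
  have hr : 0 < r := div_pos hb0 hθ1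
  have hσc : ∀ i : ℕ, 1 ≤ i → i ≤ θmax + 1 → σ i = c := h1
  -- closed form above θmax+1
  have key : ∀ e : ℕ, e ≤ θmax → σ (θmax + 2 + e) = c * (1 + (b - 1) * (1 + r) ^ e) := by
    intro e
    induction e using Nat.strong_induction_on with
    | _ e ih =>
      intro he
      have hgt : θmax + 1 < θmax + 2 + e := by omega
      rw [h2 _ hgt]
      have hterm : ∀ j ∈ Finset.range (θmax + 1),
          σ (θmax + 2 + e - j - 1) =
            c + (if j ∈ Finset.range e then c * (b - 1) * (1 + r) ^ (e - 1 - j) else 0) := by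
        intro j hj
        simp only [Finset.mem_range] at hj ⊢
        by_cases hje : j < e
        · have hidx : θmax + 2 + e - j - 1 = θmax + 2 + (e - 1 - j) := by omega
          rw [hidx, ih (e - 1 - j) (by omega) (by omega), if_pos hje]
          ring
        · have hidx : θmax + 2 + e - j - 1 = θmax + 1 + e - j := by omega
          rw [hidx, if_neg hje, hσc _ (by omega) (by omega), add_zero]
      rw [Finset.sum_congr rfl hterm, Finset.sum_add_distrib, Finset.sum_const,
        Finset.card_range, Finset.sum_ite_mem]
      have hinter : Finset.range (θmax + 1) ∩ Finset.range e = Finset.range e :=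
        Finset.inter_eq_right.mpr (Finset.range_subset_range.mpr (by omega))
      rw [hinter]
      have hrefl : ∑ j ∈ Finset.range e, c * (b - 1) * (1 + r) ^ (e - 1 - j)
          = ∑ j ∈ Finset.range e, c * (b - 1) * (1 + r) ^ j :=
        Finset.sum_range_reflect (fun j => c * (b - 1) * (1 + r) ^ j) e
      rw [hrefl, ← Finset.mul_sum, geom_sum_eq (by nlinarith : (1:ℝ) + r ≠ 1)]
      have h1r : (1:ℝ) + r - 1 = r := by ring
      rw [h1r]
      have hrne : r ≠ 0 := ne_of_gt hr
      have hθne : ((θmax:ℝ) + 1) ≠ 0 := ne_of_gt hθ1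
      rw [hr_def] at hrne ⊢
      field_simp
      ring
  -- part 1
  have part1 : ∀ i : ℕ, i ≤ θmax + 1 →
      σ i = b * (1 / ((θmax : ℝ) + 1)) *
          (∑ j ∈ Finset.range (θmax + 1), σ (((j : ℤ) + 1 - (i : ℤ)).natAbs)) +
        (if i = 0 then 1 else 0) := by
    intro i hi
    rcases Nat.eq_zero_or_pos i with h | h
    · subst h
      push_cast
      have hterm : ∀ j ∈ Finset.range (θmax + 1),
          σ (((j : ℤ) + 1 - (0 : ℤ)).natAbs) = c := by
        intro j hj
        simp only [Finset.mem_range] at hj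
        have : ((j : ℤ) + 1 - (0 : ℤ)).natAbs = j + 1 := by omega
        rw [this]
        exact hσc _ (by omega) (by omega)
      rw [Finset.sum_congr rfl hterm, Finset.sum_const, Finset.card_range]
      simp only [if_pos rfl, nsmul_eq_mul, Nat.cast_add, Nat.cast_one]
      rw [h0, hc_def]
      have hDne : D ≠ 0 := ne_of_gt hD
      have hθne : ((θmax:ℝ) + 1) ≠ 0 := ne_of_gt hθ1
      rw [hD_def] at hDne ⊢
      field_simp
      ring
    · have hterm : ∀ j ∈ Finset.range (θmax + 1),
          σ (((j : ℤ) + 1 - (i : ℤ)).natAbs) = c + (if j = i - 1 then σ 0 - c else 0) := by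
        intro j hj
        simp only [Finset.mem_range] at hj
        by_cases hji : j = i - 1
        · have : ((j : ℤ) + 1 - (i : ℤ)).natAbs = 0 := by omega
          rw [this, if_pos hji]
          ring
        · have hk1 : 1 ≤ ((j : ℤ) + 1 - (i : ℤ)).natAbs := by omega
          have hk2 : ((j : ℤ) + 1 - (i : ℤ)).natAbs ≤ θmax + 1 := by omega
          rw [if_neg hji, hσc _ hk1 hk2, add_zero]
      rw [Finset.sum_congr rfl hterm, Finset.sum_add_distrib, Finset.sum_const,
        Finset.card_range, Finset.sum_ite_eq' (Finset.range (θmax + 1)) (i - 1),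
        if_pos (by simp only [Finset.mem_range]; omega)]
      rw [if_neg (by omega), hσc i h hi, h0, hc_def]
      have hDne : D ≠ 0 := ne_of_gt hD
      have hθne : ((θmax:ℝ) + 1) ≠ 0 := ne_of_gt hθ1
      rw [nsmul_eq_mul, Nat.cast_add, Nat.cast_one]
      rw [hD_def] at hDne ⊢
      field_simp
      ring
  refine ⟨part1, ?_, ?_, ?_⟩
  -- part 2
  · have k0 := key 0 (by omega)
    simp only [add_zero, pow_zero, mul_one] at k0
    rw [show θmax + 2 + 0 = θmax + 2 by omega] at k0
    rw [k0, hσc (θmax + 1) (by omega) (le_refl _)]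
    ring
  -- part 3
  · have k0 := key 0 (by omega)
    simp only [add_zero, pow_zero, mul_one] at k0
    rw [show θmax + 2 + 0 = θmax + 2 by omega] at k0
    rw [k0, hσc (θmax + 1) (by omega) (le_refl _)]
    intro hcon
    have : c * (1 + (b - 1)) = c * b := by ring
    nlinarith [hc]
  -- part 4
  · have hMeq : M₁ = c • (fun i j : Fin (θmax + 1) =>
        if (i:ℕ) < (j:ℕ) then 1 + (b - 1) * (1 + r) ^ ((j:ℕ) - (i:ℕ) - 1) else (1:ℝ)) := by
      ext i j
      rw [hM i j]
      simp only [Pi.smul_apply, smul_eq_mul]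
      by_cases hij : (i:ℕ) < (j:ℕ)
      · have hidx : θmax + 1 + (j:ℕ) - (i:ℕ) = θmax + 2 + ((j:ℕ) - (i:ℕ) - 1) := by omega
        rw [hidx, key _ (by omega), if_pos hij]
      · have hi1 : 1 ≤ θmax + 1 + (j:ℕ) - (i:ℕ) := by omega
        have hi2 : θmax + 1 + (j:ℕ) - (i:ℕ) ≤ θmax + 1 := by omega
        rw [hσc _ hi1 hi2, if_neg hij, mul_one]
    set B : Matrix (Fin (θmax + 1)) (Fin (θmax + 1)) ℝ := (fun i j : Fin (θmax + 1) =>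
        if (i:ℕ) < (j:ℕ) then 1 + (b - 1) * (1 + r) ^ ((j:ℕ) - (i:ℕ) - 1) else (1:ℝ)) with hB_def
    set T : Matrix (Fin (θmax + 1)) (Fin (θmax + 1)) ℝ := (fun i j : Fin (θmax + 1) =>
        if i = j then 1 else if (i:ℕ) + 1 = (j:ℕ) then -1 else 0) with hT_def
    set C : Matrix (Fin (θmax + 1)) (Fin (θmax + 1)) ℝ := (fun i j : Fin (θmax + 1) =>
        if (i:ℕ) = θmax then 1
        else if (j:ℕ) = (i:ℕ) + 1 then b - 1
        else if (i:ℕ) + 1 < (j:ℕ) then (b - 1) * r * (1 + r) ^ ((j:ℕ) - (i:ℕ) - 2)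
        else 0) with hC_def
    have hBval : ∀ i j : Fin (θmax + 1), B i j =
        if (i:ℕ) < (j:ℕ) then 1 + (b - 1) * (1 + r) ^ ((j:ℕ) - (i:ℕ) - 1) else (1:ℝ) := by
      intro i j; rw [hB_def]
    have hCval : ∀ i j : Fin (θmax + 1), C i j =
        if (i:ℕ) = θmax then 1
        else if (j:ℕ) = (i:ℕ) + 1 then b - 1
        else if (i:ℕ) + 1 < (j:ℕ) then (b - 1) * r * (1 + r) ^ ((j:ℕ) - (i:ℕ) - 2)
        else 0 := by
      intro i j; rw [hC_def]
    have hTval : ∀ i j : Fin (θmax + 1), T i j =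
        if i = j then 1 else if (i:ℕ) + 1 = (j:ℕ) then -1 else 0 := by
      intro i j; rw [hT_def]
    have hTB : T * B = C := by
      ext i j
      rw [Matrix.mul_apply]
      have hsplit : ∀ k : Fin (θmax + 1), T i k * B k j =
          (if i = k then B k j else 0) + (if (i:ℕ) + 1 = (k:ℕ) then -B k j else 0) := by
        intro k
        rw [hTval]
        by_cases hik : i = k
        · subst hik
          rw [if_pos rfl, if_pos rfl, if_neg (by omega), one_mul, add_zero]
        · rw [if_neg hik, if_neg hik]
          by_cases h2 : (i:ℕ) + 1 = (k:ℕ)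
          · rw [if_pos h2, if_pos h2, zero_add, neg_one_mul]
          · rw [if_neg h2, if_neg h2, zero_mul, add_zero]
      rw [Finset.sum_congr rfl (fun k _ => hsplit k), Finset.sum_add_distrib,
        Finset.sum_ite_eq Finset.univ i, if_pos (Finset.mem_univ i)]
      by_cases hi : (i:ℕ) < θmax
      · rw [Finset.sum_eq_single (⟨(i:ℕ)+1, by omega⟩ : Fin (θmax + 1))]
        · rw [if_pos rfl]
          rw [hBval, hBval, hCval]
          have hk0 : ((⟨(i:ℕ)+1, by omega⟩ : Fin (θmax + 1)) : ℕ) = (i:ℕ) + 1 := rfl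
          simp only [hk0]
          split_ifs <;>
            first
            | (exfalso; omega)
            | ring1
            | (have hz : (j:ℕ) - (i:ℕ) - 1 = 0 := by omega
               rw [hz, pow_zero]; ring1)
            | (have e1 : (j:ℕ) - (i:ℕ) - 1 = ((j:ℕ) - ((i:ℕ)+1) - 1) + 1 := by omega
               have e2 : (j:ℕ) - (i:ℕ) - 2 = (j:ℕ) - ((i:ℕ)+1) - 1 := by omega
               rw [e1, e2, pow_succ]; ring1)
            | (have e1 : (j:ℕ) - (i:ℕ) - 1 = ((j:ℕ) - (1+(i:ℕ)) - 1) + 1 := by omega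
               have e2 : (j:ℕ) - (i:ℕ) - 2 = (j:ℕ) - (1+(i:ℕ)) - 1 := by omega
               rw [e1, e2, pow_succ]; ring1)
        · intro k _ hk
          rw [if_neg]
          intro hc2
          exact hk (Fin.ext (by simp [← hc2]))
        · intro hmem
          exact absurd (Finset.mem_univ _) hmem
      · have hieq : (i:ℕ) = θmax := by omega
        rw [Finset.sum_eq_zero (by
          intro k _
          rw [if_neg]
          have := k.isLt
          omega), add_zero, hBval, hCval, if_pos hieq, if_neg (by have := j.isLt; omega)]
    have hdetT : T.det = 1 := by
      rw [Matrix.det_of_upperTriangular (by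
        intro i j hij
        have hij' : (j:ℕ) < (i:ℕ) := hij
        rw [hTval, if_neg (by intro h; rw [h] at hij'; omega), if_neg (by omega)])]
      apply Finset.prod_eq_one
      intro i _
      rw [hTval, if_pos rfl]
    have hdetC : C.det = (-1:ℝ) ^ θmax * (b - 1) ^ θmax := by
      have hexp : C.det = ∑ i : Fin (θmax+1),
          (-1) ^ (i:ℕ) * C i 0 * (C.submatrix i.succAbove Fin.succ).det :=
        Matrix.det_succ_column_zero C
      rw [hexp, Finset.sum_eq_single (Fin.last θmax)]
      · have hClast0 : C (Fin.last θmax) 0 = 1 := by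
          rw [hCval, if_pos (by simp [Fin.val_last])]
        have hminor : (C.submatrix (Fin.last θmax).succAbove Fin.succ).det = (b-1) ^ θmax := by
          rw [Fin.succAbove_last]
          rw [Matrix.det_of_upperTriangular (by
            intro i j hij
            have hij' : (j:ℕ) < (i:ℕ) := hij
            rw [Matrix.submatrix_apply, hCval]
            rw [if_neg (by simp [Fin.coe_castSucc]; omega),
              if_neg (by simp [Fin.coe_castSucc, Fin.val_succ]; omega),
              if_neg (by simp [Fin.coe_castSucc, Fin.val_succ]; omega)])]
          have hdiag : ∀ i : Fin θmax,
              C.submatrix Fin.castSucc Fin.succ i i = b - 1 := by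
            intro i
            rw [Matrix.submatrix_apply, hCval]
            rw [if_neg (by simp [Fin.coe_castSucc]; omega),
              if_pos (by simp [Fin.coe_castSucc, Fin.val_succ])]
          rw [Finset.prod_congr rfl (fun i _ => hdiag i), Finset.prod_const, Finset.card_univ,
            Fintype.card_fin]
        rw [hClast0, hminor, Fin.val_last, mul_one]
      · intro k _ hk
        have hklt : (k:ℕ) < θmax := by
          have h1' := k.isLt
          have h2' : (k:ℕ) ≠ θmax := by
            intro h
            exact hk (Fin.ext (by simp [h, Fin.val_last]))
          omega
        have hC0 : C k 0 = 0 := by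
          rw [hCval]
          rw [if_neg (by omega), if_neg (by simp), if_neg (by simp)]
        rw [hC0]
        ring
      · intro hmem
        exact absurd (Finset.mem_univ _) hmem
    have hdetB : B.det = (-1:ℝ) ^ θmax * (b - 1) ^ θmax := by
      have hmul := congrArg Matrix.det hTB
      rw [Matrix.det_mul, hdetT, one_mul] at hmul
      rw [hmul, hdetC]
    rw [hMeq]
    rw [show (c • (fun i j : Fin (θmax + 1) =>
        if (i:ℕ) < (j:ℕ) then 1 + (b - 1) * (1 + r) ^ ((j:ℕ) - (i:ℕ) - 1) else (1:ℝ)))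
        = c • B from rfl]
    rw [Matrix.det_smul, hdetB]
    apply mul_ne_zero
    · exact pow_ne_zero _ (ne_of_gt hc)
    · apply mul_ne_zero
      · exact pow_ne_zero _ (by norm_num)
      · exact pow_ne_zero _ (by intro h; nlinarith)
end
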